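/- (Scalar FPI, convergence to the maximal/minimal solution) Let a > 0, g > 0, and let x_m ≤ x_M be the roots of g·x² + (1 − a² − g·h)·x − h = 0 when D := (1 − a² − g·h)² + 4·g·h ≥ 0. Define x_{k+1} := a²·x_k/(1 + g·x_k) + h. (i) If h > h_M := −(1−a)²/g and x_0 > x_M, then (x_k) is nonincreasing, converges to x_M, and lim_{k→∞} |x_k − x_M|^{1/k} = a²/(1+g·x_M)² < 1; if instead x_m < x_0 < x_M, then (x_k) is nondecreasing and converges to x_M with the same root-rate. (ii) If h < h_m := −(1+a)²/g and x_0 > x_M, then (x_k) converges to the minimal solution x_m. -/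

import Mathlib

open Filter Topology

lemma aux_quad (a g h r : ℝ) (hg : g ≠ 0)
    (hr : r ^ 2 = (1 - a ^ 2 - g * h) ^ 2 + 4 * g * h) :
    g * ((-(1 - a ^ 2 - g * h) + r) / (2 * g)) ^ 2
      + (1 - a ^ 2 - g * h) * ((-(1 - a ^ 2 - g * h) + r) / (2 * g)) - h = 0 := by
  field_simp
  linear_combination hr

lemma aux_step (a g h z y : ℝ) (hz : 1 + g * z ≠ 0) (hy0 : 1 + g * y ≠ 0)
    (hy : g * y ^ 2 + (1 - a ^ 2 - g * h) * y - h = 0) :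
    a ^ 2 * z / (1 + g * z) + h - y = a ^ 2 * (z - y) / ((1 + g * z) * (1 + g * y)) := by
  rw [eq_div_iff (mul_ne_zero hz hy0)]
  have e1 : a ^ 2 * z / (1 + g * z) * (1 + g * z) = a ^ 2 * z := div_mul_cancel₀ _ hz
  calc (a ^ 2 * z / (1 + g * z) + h - y) * ((1 + g * z) * (1 + g * y))
      = (a ^ 2 * z / (1 + g * z) * (1 + g * z)) * (1 + g * y)
        + (h - y) * ((1 + g * z) * (1 + g * y)) := by ring
    _ = (a ^ 2 * z) * (1 + g * y) + (h - y) * ((1 + g * z) * (1 + g * y)) := by rw [e1]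
    _ = a ^ 2 * (z - y) := by linear_combination (-(1 + g * z)) * hy

lemma aux_rate (t m M : ℝ) (e : ℕ → ℝ) (ht : 0 < t) (hm : 0 < m)
    (hlo : ∀ k, m * t ^ k ≤ |e k|) (hhi : ∀ k, |e k| ≤ M * t ^ k) :
    Filter.Tendsto (fun k : ℕ => |e k| ^ ((1 : ℝ) / (k : ℝ))) Filter.atTop (nhds t) := by
  have hM : 0 < M := by
    have h1 := (hlo 0).trans (hhi 0)
    simp only [pow_zero, mul_one] at h1
    linarith
  have key : ∀ c : ℝ, 0 < c →
      Tendsto (fun k : ℕ => c ^ ((1 : ℝ) / (k : ℝ)) * t) atTop (nhds t) := by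
    intro c hc
    have h2 : Tendsto (fun k : ℕ => c ^ ((1 : ℝ) / (k : ℝ))) atTop (nhds 1) := by
      have hcont : ContinuousAt (fun y : ℝ => c ^ y) 0 := Real.continuousAt_const_rpow hc.ne'
      have := hcont.tendsto.comp tendsto_one_div_atTop_nhds_zero_nat
      simpa [Function.comp_def, Real.rpow_zero] using this
    simpa using h2.mul_const t
  have heq : ∀ c : ℝ, 0 < c → ∀ k : ℕ, k ≠ 0 →
      (c * t ^ k) ^ ((1 : ℝ) / (k : ℝ)) = c ^ ((1 : ℝ) / (k : ℝ)) * t := by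
    intro c hc k hk
    have hk0 : (k : ℝ) ≠ 0 := Nat.cast_ne_zero.mpr hk
    rw [Real.mul_rpow hc.le (pow_nonneg ht.le k)]
    congr 1
    rw [← Real.rpow_natCast t k, ← Real.rpow_mul ht.le, mul_one_div, div_self hk0,
      Real.rpow_one]
  refine tendsto_of_tendsto_of_tendsto_of_le_of_le' (key m hm) (key M hM) ?_ ?_
  · filter_upwards [eventually_ge_atTop 1] with k hk
    have hk' : k ≠ 0 := by omega
    rw [← heq m hm k hk']
    exact Real.rpow_le_rpow (by positivity) (hlo k) (by positivity)
  · filter_upwards [eventually_ge_atTop 1] with k hk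
    have hk' : k ≠ 0 := by omega
    rw [← heq M hM k hk']
    exact Real.rpow_le_rpow (abs_nonneg _) (hhi k) (by positivity)

lemma aux_main (a g h xM xm t mB MB : ℝ) (x : ℕ → ℝ) (hg : 0 < g)
    (hrec : ∀ k : ℕ, x (k + 1) = a ^ 2 * x k / (1 + g * x k) + h)
    (hQM : g * xM ^ 2 + (1 - a ^ 2 - g * h) * xM - h = 0)
    (hQm : g * xm ^ 2 + (1 - a ^ 2 - g * h) * xm - h = 0)
    (hpm : 0 < 1 + g * xm) (hpMm : 1 + g * xm < 1 + g * xM)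
    (ht : t * (1 + g * xM) = 1 + g * xm)
    (hne : x 0 ≠ xM)
    (hinv : ∀ k, xm < x k)
    (hd : ∀ k, mB ≤ x k - xm ∧ x k - xm ≤ MB) (hmB : 0 < mB) :
    Filter.Tendsto (fun k : ℕ => |x k - xM| ^ ((1 : ℝ) / (k : ℝ))) Filter.atTop (nhds t) := by
  have hpM : 0 < 1 + g * xM := hpm.trans hpMm
  have htpos : 0 < t := by
    have : t = (1 + g * xm) / (1 + g * xM) := by field_simp [hpM.ne']; linarith [ht]
    rw [this]; positivity
  have hz : ∀ k, (0 : ℝ) < 1 + g * x k := by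
    intro k
    have := hinv k
    nlinarith
  have hid : ∀ k, (x k - xM) * (1 + g * xM) ^ k * (x 0 - xm)
      = (x k - xm) * (1 + g * xm) ^ k * (x 0 - xM) := by
    intro k
    induction k with
    | zero => simp; ring
    | succ n ih =>
      have eM : x (n + 1) - xM = a ^ 2 * (x n - xM) / ((1 + g * x n) * (1 + g * xM)) := by
        rw [hrec n]; exact aux_step a g h (x n) xM (hz n).ne' hpM.ne' hQM
      have em : x (n + 1) - xm = a ^ 2 * (x n - xm) / ((1 + g * x n) * (1 + g * xm)) := by
        rw [hrec n]; exact aux_step a g h (x n) xm (hz n).ne' hpm.ne' hQm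
      rw [eM, em, pow_succ, pow_succ]
      rw [div_mul_eq_mul_div, div_mul_eq_mul_div, div_mul_eq_mul_div, div_mul_eq_mul_div]
      rw [div_eq_div_iff (mul_ne_zero (hz n).ne' hpM.ne') (mul_ne_zero (hz n).ne' hpm.ne')]
      linear_combination (a ^ 2 * (1 + g * x n) * (1 + g * xM) * (1 + g * xm)) * ih
  have hd0 : 0 < x 0 - xm := lt_of_lt_of_le hmB (hd 0).1
  have he0 : x 0 - xM ≠ 0 := sub_ne_zero.mpr hne
  have hek : ∀ k, |x k - xM| = (x k - xm) * |x 0 - xM| / (x 0 - xm) * t ^ k := by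
    intro k
    have hpk : t ^ k * (1 + g * xM) ^ k = (1 + g * xm) ^ k := by rw [← mul_pow, ht]
    have h2 := hid k
    rw [← hpk] at h2
    have hpMk : (0 : ℝ) < (1 + g * xM) ^ k := pow_pos hpM k
    have h4 : (x k - xM) * (x 0 - xm) = (x k - xm) * t ^ k * (x 0 - xM) := by
      apply mul_right_cancel₀ hpMk.ne'
      linear_combination h2
    have h3 : x k - xM = (x k - xm) * (x 0 - xM) / (x 0 - xm) * t ^ k := by
      rw [div_mul_eq_mul_div, eq_div_iff hd0.ne']
      linear_combination h4
    have hdk : 0 < x k - xm := lt_of_lt_of_le hmB (hd k).1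
    rw [h3, abs_mul, abs_div, abs_mul, abs_of_nonneg hdk.le, abs_of_nonneg hd0.le,
      abs_of_nonneg (pow_nonneg htpos.le k)]
  have hae : 0 < |x 0 - xM| := abs_pos.mpr he0
  refine aux_rate t (mB * |x 0 - xM| / (x 0 - xm)) (MB * |x 0 - xM| / (x 0 - xm))
    (fun k => x k - xM) htpos (div_pos (mul_pos hmB hae) hd0) ?_ ?_
  · intro k
    rw [hek k]
    gcongr
    exact (hd k).1
  · intro k
    rw [hek k]
    gcongr
    exact (hd k).2

set_option maxHeartbeats 2000000 in
/-- Scalar fixed-point iteration, convergence to the maximal/minimal solution.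
(i) For `h > h_M`: starting above `x_M` the iterates decrease to `x_M`; starting in
`(x_m, x_M)` they increase to `x_M`; in both cases the root-rate is
`a²/(1 + g x_M)² < 1`.  (ii) For `h < h_m` and `x₀ > x_M`, the iterates converge to the
minimal solution `x_m`. -/
theorem scalar_fpi_convergence (a g h : ℝ) (ha : 0 < a) (hg : 0 < g)
    (x : ℕ → ℝ) (hrec : ∀ k : ℕ, x (k + 1) = a ^ 2 * x k / (1 + g * x k) + h) :
    let D : ℝ := (1 - a ^ 2 - g * h) ^ 2 + 4 * g * h
    let hM : ℝ := -(1 - a) ^ 2 / g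
    let hm : ℝ := -(1 + a) ^ 2 / g
    let xM : ℝ := (-(1 - a ^ 2 - g * h) + Real.sqrt D) / (2 * g)
    let xm : ℝ := (-(1 - a ^ 2 - g * h) - Real.sqrt D) / (2 * g)
    let t : ℝ := a ^ 2 / (1 + g * xM) ^ 2
    (h > hM →
      (x 0 > xM →
        Antitone x ∧ Filter.Tendsto x Filter.atTop (nhds xM) ∧ t < 1 ∧
        Filter.Tendsto (fun k : ℕ => |x k - xM| ^ ((1 : ℝ) / (k : ℝ)))
          Filter.atTop (nhds t)) ∧
      (xm < x 0 ∧ x 0 < xM →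
        Monotone x ∧ Filter.Tendsto x Filter.atTop (nhds xM) ∧ t < 1 ∧
        Filter.Tendsto (fun k : ℕ => |x k - xM| ^ ((1 : ℝ) / (k : ℝ)))
          Filter.atTop (nhds t))) ∧
    (h < hm → x 0 > xM → Filter.Tendsto x Filter.atTop (nhds xm)) := by
  intro D hM' hm' xM xm t
  have hg' : g ≠ 0 := hg.ne'
  have hDval : D = (1 - a ^ 2 - g * h) ^ 2 + 4 * g * h := rfl
  have hxMval : xM = (-(1 - a ^ 2 - g * h) + Real.sqrt D) / (2 * g) := rfl
  have hxmval : xm = (-(1 - a ^ 2 - g * h) - Real.sqrt D) / (2 * g) := rfl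
  have htval : t = a ^ 2 / (1 + g * xM) ^ 2 := rfl
  have hhMval : hM' = -(1 - a) ^ 2 / g := rfl
  have hhmval : hm' = -(1 + a) ^ 2 / g := rfl
  clear_value D hM' hm' xM xm t
  have hgmul : ∀ u v : ℝ, u < v → 1 + g * u < 1 + g * v := fun u v huv => by
    linarith [mul_lt_mul_of_pos_left huv hg]
  have hgmul' : ∀ u v : ℝ, u ≤ v → 1 + g * u ≤ 1 + g * v := fun u v huv => by
    linarith [mul_le_mul_of_nonneg_left huv hg.le]
  constructor
  · -- case (i): h > hM'
    intro hHM
    rw [hhMval] at hHM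
    have hgh1 : 0 < g * h + (1 - a) ^ 2 := by
      have h1 : -(1 - a) ^ 2 / g < h := hHM
      rw [div_lt_iff₀ hg] at h1
      linarith [mul_comm h g]
    have hgh2 : 0 < g * h + (1 + a) ^ 2 := by nlinarith [hgh1, ha]
    have hupos : 0 < 1 + a ^ 2 + g * h := by nlinarith [hgh1, ha]
    have hDpos : 0 < D := by rw [hDval]; nlinarith [mul_pos hgh1 hgh2]
    have hsq : Real.sqrt D ^ 2 = (1 - a ^ 2 - g * h) ^ 2 + 4 * g * h := by
      rw [Real.sq_sqrt hDpos.le]; exact hDval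
    have hsqpos : 0 < Real.sqrt D := Real.sqrt_pos.mpr hDpos
    have hQM : g * xM ^ 2 + (1 - a ^ 2 - g * h) * xM - h = 0 := by
      rw [hxMval]; exact aux_quad a g h (Real.sqrt D) hg' hsq
    have hQm : g * xm ^ 2 + (1 - a ^ 2 - g * h) * xm - h = 0 := by
      have e : (-(1 - a ^ 2 - g * h) - Real.sqrt D) / (2 * g)
          = (-(1 - a ^ 2 - g * h) + -Real.sqrt D) / (2 * g) := by ring
      rw [hxmval, e]; exact aux_quad a g h (-Real.sqrt D) hg' (by linear_combination hsq)
    have hpMv : 1 + g * xM = (1 + a ^ 2 + g * h + Real.sqrt D) / 2 := by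
      rw [hxMval]; field_simp; ring
    have hpmv : 1 + g * xm = (1 + a ^ 2 + g * h - Real.sqrt D) / 2 := by
      rw [hxmval]; field_simp; ring
    have hsqlt : Real.sqrt D < 1 + a ^ 2 + g * h := by
      refine (Real.sqrt_lt' hupos).mpr ?_
      rw [hDval]; nlinarith [sq_nonneg a, ha]
    have hpm_pos : 0 < 1 + g * xm := by rw [hpmv]; linarith
    have hpM_pos : 0 < 1 + g * xM := by rw [hpMv]; linarith
    have hpmM : 1 + g * xm < 1 + g * xM := by rw [hpmv, hpMv]; linarith
    have hprod : (1 + g * xM) * (1 + g * xm) = a ^ 2 := by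
      rw [hpMv, hpmv]; linear_combination (-(1 : ℝ) / 4) * hsq
    have htpM : t * (1 + g * xM) = 1 + g * xm := by
      rw [htval, div_mul_eq_mul_div, div_eq_iff (by positivity)]
      linear_combination (-(1 + g * xM)) * hprod
    have htpos : 0 < t := by rw [htval]; positivity
    have ht1 : t < 1 := by
      rw [htval, div_lt_one (by positivity)]
      calc a ^ 2 = (1 + g * xM) * (1 + g * xm) := hprod.symm
        _ < (1 + g * xM) * (1 + g * xM) := mul_lt_mul_of_pos_left hpmM hpM_pos
        _ = (1 + g * xM) ^ 2 := by ring
    have hxMm : xm < xM := by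
      rw [hxmval, hxMval, div_lt_div_iff_of_pos_right (by positivity)]
      linarith [hsqpos]
    constructor
    · -- sub-case A : x 0 > xM
      intro hx0
      have inv : ∀ k, xM < x k := by
        intro k
        induction k with
        | zero => exact hx0
        | succ n ih =>
          have hzpos : 0 < 1 + g * x n := by linarith [hgmul xM (x n) ih, hpM_pos]
          have eM : x (n + 1) - xM = a ^ 2 * (x n - xM) / ((1 + g * x n) * (1 + g * xM)) := by
            rw [hrec n]; exact aux_step a g h (x n) xM hzpos.ne' hpM_pos.ne' hQM
          have hp : 0 < x (n + 1) - xM := by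
            rw [eM]
            exact div_pos (mul_pos (pow_pos ha 2) (sub_pos.mpr ih)) (mul_pos hzpos hpM_pos)
          linarith
      have hstepk : ∀ n, x (n + 1) - xM ≤ t * (x n - xM) := by
        intro n
        have ih := inv n
        have hzpos : 0 < 1 + g * x n := by linarith [hgmul xM (x n) ih, hpM_pos]
        have eM : x (n + 1) - xM = a ^ 2 * (x n - xM) / ((1 + g * x n) * (1 + g * xM)) := by
          rw [hrec n]; exact aux_step a g h (x n) xM hzpos.ne' hpM_pos.ne' hQM
        have hfr : a ^ 2 / ((1 + g * x n) * (1 + g * xM)) ≤ t := by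
          rw [htval]
          have h5 : (1 + g * xM) ^ 2 ≤ (1 + g * x n) * (1 + g * xM) := by
            calc (1 + g * xM) ^ 2 = (1 + g * xM) * (1 + g * xM) := by ring
              _ ≤ (1 + g * x n) * (1 + g * xM) :=
                mul_le_mul_of_nonneg_right (hgmul' xM (x n) ih.le) hpM_pos.le
          exact div_le_div_of_nonneg_left (sq_nonneg a) (by positivity) h5
        calc x (n + 1) - xM = a ^ 2 / ((1 + g * x n) * (1 + g * xM)) * (x n - xM) := by
              rw [eM]; ring
          _ ≤ t * (x n - xM) := mul_le_mul_of_nonneg_right hfr (by linarith)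
      have hgeo : ∀ k, x k - xM ≤ (x 0 - xM) * t ^ k := by
        intro k
        induction k with
        | zero => simp
        | succ n ih =>
          calc x (n + 1) - xM ≤ t * (x n - xM) := hstepk n
            _ ≤ t * ((x 0 - xM) * t ^ n) := mul_le_mul_of_nonneg_left ih htpos.le
            _ = (x 0 - xM) * t ^ (n + 1) := by ring
      have hanti : Antitone x := antitone_nat_of_succ_le (fun n => by
        have h1 := hstepk n
        have h2 := inv n
        have h3 : t * (x n - xM) ≤ 1 * (x n - xM) :=
          mul_le_mul_of_nonneg_right ht1.le (by linarith)
        linarith)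
      have htend : Filter.Tendsto x Filter.atTop (nhds xM) := by
        have h0 : Tendsto (fun k : ℕ => (x 0 - xM) * t ^ k) atTop (nhds 0) := by
          simpa using (tendsto_pow_atTop_nhds_zero_of_lt_one htpos.le ht1).const_mul (x 0 - xM)
        have h1 : Tendsto (fun k => x k - xM) atTop (nhds 0) :=
          squeeze_zero_norm (fun k => by
            rw [Real.norm_eq_abs, abs_of_nonneg (by linarith [inv k])]
            exact hgeo k) h0
        simpa using h1.add_const xM
      refine ⟨hanti, htend, ht1, ?_⟩
      refine aux_main a g h xM xm t (xM - xm) (x 0 - xm) x hg hrec hQM hQm hpm_pos hpmM htpM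
        (ne_of_gt hx0) (fun k => lt_trans hxMm (inv k)) (fun k => ?_) (by linarith)
      exact ⟨by linarith [inv k], by linarith [hanti (Nat.zero_le k)]⟩
    · -- sub-case B : xm < x 0 < xM
      rintro ⟨hx0m, hx0M⟩
      have hp0 : 0 < 1 + g * x 0 := by linarith [hgmul xm (x 0) hx0m, hpm_pos]
      have hstep2 : ∀ n, x 0 ≤ x n → x n < xM → x n ≤ x (n + 1) ∧ x (n + 1) < xM := by
        intro n h1 h2
        have hzpos : 0 < 1 + g * x n := by linarith [hgmul' (x 0) (x n) h1, hp0]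
        have eM : x (n + 1) - xM = a ^ 2 * (x n - xM) / ((1 + g * x n) * (1 + g * xM)) := by
          rw [hrec n]; exact aux_step a g h (x n) xM hzpos.ne' hpM_pos.ne' hQM
        constructor
        · have h6 : 1 + g * xm ≤ 1 + g * x n := by
            linarith [hgmul xm (x 0) hx0m, hgmul' (x 0) (x n) h1]
          have hc1 : a ^ 2 ≤ (1 + g * x n) * (1 + g * xM) := by
            calc a ^ 2 = (1 + g * xM) * (1 + g * xm) := hprod.symm
              _ ≤ (1 + g * xM) * (1 + g * x n) := mul_le_mul_of_nonneg_left h6 hpM_pos.le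
              _ = (1 + g * x n) * (1 + g * xM) := by ring
          have h7 : x n - xM ≤ x (n + 1) - xM := by
            have h9 : x n - xM ≤ 0 := by linarith
            have h10 : 0 ≤ (a ^ 2 - (1 + g * x n) * (1 + g * xM)) * (x n - xM) := by
              have h12 := mul_nonneg (neg_nonneg.2 (by linarith : a ^ 2 - (1 + g * x n) * (1 + g * xM) ≤ 0)) (neg_nonneg.2 h9)
              linarith [h12]
            have h11 : x (n + 1) - xM - (x n - xM)
                = (a ^ 2 - (1 + g * x n) * (1 + g * xM)) * (x n - xM)
                  / ((1 + g * x n) * (1 + g * xM)) := by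
              rw [eM, eq_div_iff (mul_pos hzpos hpM_pos).ne', sub_mul, div_mul_cancel₀ _ (mul_pos hzpos hpM_pos).ne']; ring
            have h13 : 0 ≤ x (n + 1) - xM - (x n - xM) := by
              rw [h11]; exact div_nonneg h10 (by positivity)
            linarith
          linarith
        · have h8 : x (n + 1) - xM < 0 := by
            rw [eM]
            exact div_neg_of_neg_of_pos
              (mul_neg_of_pos_of_neg (pow_pos ha 2) (by linarith)) (mul_pos hzpos hpM_pos)
          linarith
      have inv : ∀ k, x 0 ≤ x k ∧ x k < xM := by
        intro k
        induction k with
        | zero => exact ⟨le_refl _, hx0M⟩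
        | succ n ih =>
          obtain ⟨h1, h2⟩ := ih
          obtain ⟨h3, h4⟩ := hstep2 n h1 h2
          exact ⟨le_trans h1 h3, h4⟩
      have hmono : Monotone x := monotone_nat_of_le_succ (fun n =>
        (hstep2 n (inv n).1 (inv n).2).1)
      have ht2pos : 0 < a ^ 2 / ((1 + g * x 0) * (1 + g * xM)) := by positivity
      have ht2lt1 : a ^ 2 / ((1 + g * x 0) * (1 + g * xM)) < 1 := by
        rw [div_lt_one (by positivity)]
        calc a ^ 2 = (1 + g * xM) * (1 + g * xm) := hprod.symm
          _ < (1 + g * xM) * (1 + g * x 0) :=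
            mul_lt_mul_of_pos_left (hgmul xm (x 0) hx0m) hpM_pos
          _ = (1 + g * x 0) * (1 + g * xM) := by ring
      have hstepk : ∀ n, xM - x (n + 1) ≤ a ^ 2 / ((1 + g * x 0) * (1 + g * xM)) * (xM - x n) := by
        intro n
        obtain ⟨h1, h2⟩ := inv n
        have hzpos : 0 < 1 + g * x n := by linarith [hgmul' (x 0) (x n) h1, hp0]
        have eM : x (n + 1) - xM = a ^ 2 * (x n - xM) / ((1 + g * x n) * (1 + g * xM)) := by
          rw [hrec n]; exact aux_step a g h (x n) xM hzpos.ne' hpM_pos.ne' hQM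
        have hfr : a ^ 2 / ((1 + g * x n) * (1 + g * xM)) ≤
            a ^ 2 / ((1 + g * x 0) * (1 + g * xM)) := by
          have h5 : (1 + g * x 0) * (1 + g * xM) ≤ (1 + g * x n) * (1 + g * xM) :=
            mul_le_mul_of_nonneg_right (hgmul' (x 0) (x n) h1) hpM_pos.le
          exact div_le_div_of_nonneg_left (sq_nonneg a) (by positivity) h5
        calc xM - x (n + 1) = a ^ 2 / ((1 + g * x n) * (1 + g * xM)) * (xM - x n) := by
              have e9 : xM - x (n + 1) = -(x (n + 1) - xM) := by ring
              rw [e9, eM]; ring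
          _ ≤ a ^ 2 / ((1 + g * x 0) * (1 + g * xM)) * (xM - x n) :=
              mul_le_mul_of_nonneg_right hfr (by linarith)
      have hgeo : ∀ k, xM - x k ≤ (xM - x 0) * (a ^ 2 / ((1 + g * x 0) * (1 + g * xM))) ^ k := by
        intro k
        induction k with
        | zero => simp
        | succ n ih =>
          calc xM - x (n + 1) ≤ a ^ 2 / ((1 + g * x 0) * (1 + g * xM)) * (xM - x n) := hstepk n
            _ ≤ a ^ 2 / ((1 + g * x 0) * (1 + g * xM)) *
                ((xM - x 0) * (a ^ 2 / ((1 + g * x 0) * (1 + g * xM))) ^ n) :=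
              mul_le_mul_of_nonneg_left ih ht2pos.le
            _ = (xM - x 0) * (a ^ 2 / ((1 + g * x 0) * (1 + g * xM))) ^ (n + 1) := by ring
      have htend : Filter.Tendsto x Filter.atTop (nhds xM) := by
        have h0 : Tendsto (fun k : ℕ =>
            (xM - x 0) * (a ^ 2 / ((1 + g * x 0) * (1 + g * xM))) ^ k) atTop (nhds 0) := by
          simpa using (tendsto_pow_atTop_nhds_zero_of_lt_one ht2pos.le ht2lt1).const_mul (xM - x 0)
        have h1 : Tendsto (fun k => x k - xM) atTop (nhds 0) :=
          squeeze_zero_norm (fun k => by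
            rw [Real.norm_eq_abs, abs_of_nonpos (by linarith [(inv k).2])]
            linarith [hgeo k]) h0
        simpa using h1.add_const xM
      refine ⟨hmono, htend, ht1, ?_⟩
      refine aux_main a g h xM xm t (x 0 - xm) (xM - xm) x hg hrec hQM hQm hpm_pos hpmM htpM
        (ne_of_lt hx0M) (fun k => by linarith [(inv k).1]) (fun k => ?_) (by linarith)
      exact ⟨by linarith [(inv k).1], by linarith [(inv k).2]⟩
  · -- case (ii) : h < hm'
    intro hHm hx0
    rw [hhmval] at hHm
    have hgh3 : g * h + (1 + a) ^ 2 < 0 := by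
      have h1 : h < -(1 + a) ^ 2 / g := hHm
      rw [lt_div_iff₀ hg] at h1
      linarith [mul_comm h g]
    have hgh4 : g * h + (1 - a) ^ 2 < 0 := by nlinarith [hgh3, ha]
    have huneg : 1 + a ^ 2 + g * h < -(2 * a) := by nlinarith [hgh3]
    have hDpos : 0 < D := by rw [hDval]; nlinarith [mul_pos_of_neg_of_neg hgh3 hgh4]
    have hsq : Real.sqrt D ^ 2 = (1 - a ^ 2 - g * h) ^ 2 + 4 * g * h := by
      rw [Real.sq_sqrt hDpos.le]; exact hDval
    have hsqpos : 0 < Real.sqrt D := Real.sqrt_pos.mpr hDpos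
    have hQM : g * xM ^ 2 + (1 - a ^ 2 - g * h) * xM - h = 0 := by
      rw [hxMval]; exact aux_quad a g h (Real.sqrt D) hg' hsq
    have hQm : g * xm ^ 2 + (1 - a ^ 2 - g * h) * xm - h = 0 := by
      have e : (-(1 - a ^ 2 - g * h) - Real.sqrt D) / (2 * g)
          = (-(1 - a ^ 2 - g * h) + -Real.sqrt D) / (2 * g) := by ring
      rw [hxmval, e]; exact aux_quad a g h (-Real.sqrt D) hg' (by linear_combination hsq)
    have hpMv : 1 + g * xM = (1 + a ^ 2 + g * h + Real.sqrt D) / 2 := by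
      rw [hxMval]; field_simp; ring
    have hpmv : 1 + g * xm = (1 + a ^ 2 + g * h - Real.sqrt D) / 2 := by
      rw [hxmval]; field_simp; ring
    have hsqlt : Real.sqrt D < -(1 + a ^ 2 + g * h) := by
      refine (Real.sqrt_lt' (by linarith [huneg, ha] : (0:ℝ) < -(1 + a ^ 2 + g * h))).mpr ?_
      rw [hDval]; nlinarith [sq_nonneg a, ha]
    have hpM_neg : 1 + g * xM < 0 := by rw [hpMv]; linarith
    have hpm_lt : 1 + g * xm < 1 + g * xM := by rw [hpmv, hpMv]; linarith [hsqpos]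
    have hpm_neg : 1 + g * xm < 0 := by linarith
    have hprod : (1 + g * xM) * (1 + g * xm) = a ^ 2 := by
      rw [hpMv, hpmv]; linear_combination (-(1 : ℝ) / 4) * hsq
    have hhxm : h < xm := by
      have h1 : 0 < g * (xm - h) := by
        have e1 : g * (xm - h) = (1 + g * xm) - 1 - g * h := by ring
        rw [e1, hpmv]
        linarith [hsqlt, sq_nonneg a]
      nlinarith [h1, hg]
    have hjump : ∀ w : ℝ, 0 < 1 + g * w → a ^ 2 * w / (1 + g * w) + h < xm := by
      intro w hw
      have h1 : a ^ 2 * w / (1 + g * w) < a ^ 2 / g := by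
        rw [div_lt_div_iff₀ hw hg]
        nlinarith [pow_pos ha 2]
      have h3 : 0 < g * (xm - h) - a ^ 2 := by
        have e1 : g * (xm - h) - a ^ 2 = (1 + g * xm) - 1 - g * h - a ^ 2 := by ring
        rw [e1, hpmv]
        linarith [hsqlt, sq_nonneg a]
      have h2 : a ^ 2 / g + h < xm := by
        have e : xm - (a ^ 2 / g + h) = (g * (xm - h) - a ^ 2) / g := by field_simp; ring
        have h4 : 0 < xm - (a ^ 2 / g + h) := by rw [e]; exact div_pos h3 hg
        linarith
      linarith
    have hpmsq : 0 < (1 + g * xm) ^ 2 := by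
      linarith [mul_pos_of_neg_of_neg hpm_neg hpm_neg]
    have hpMsq : 0 < (1 + g * xM) ^ 2 := by
      linarith [mul_pos_of_neg_of_neg hpM_neg hpM_neg]
    have hrho1 : a ^ 2 < (1 + g * xm) ^ 2 := by
      calc a ^ 2 = (1 + g * xM) * (1 + g * xm) := hprod.symm
        _ < (1 + g * xm) * (1 + g * xm) := by
          have := mul_lt_mul_of_neg_right hpm_lt hpm_neg
          linarith [this]
        _ = (1 + g * xm) ^ 2 := by ring
    have hρpos : 0 < a ^ 2 / (1 + g * xm) ^ 2 := div_pos (pow_pos ha 2) hpmsq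
    have hρ1 : a ^ 2 / (1 + g * xm) ^ 2 < 1 := by
      rw [div_lt_one hpmsq]; exact hrho1
    have htail : ∀ N : ℕ, x N ≤ xm → Filter.Tendsto x Filter.atTop (nhds xm) := by
      intro N hN
      have key : ∀ j, x (N + j) ≤ xm ∧
          |x (N + j) - xm| ≤ (a ^ 2 / (1 + g * xm) ^ 2) ^ j * |x N - xm| := by
        intro j
        induction j with
        | zero => exact ⟨hN, by simp⟩
        | succ j ih =>
          show x (N + j + 1) ≤ xm ∧
            |x (N + j + 1) - xm| ≤ (a ^ 2 / (1 + g * xm) ^ 2) ^ (j + 1) * |x N - xm|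
          obtain ⟨h1, h2⟩ := ih
          have hwne : 1 + g * x (N + j) < 0 := by
            linarith [hgmul' (x (N + j)) xm h1, hpm_neg]
          have em : x (N + j + 1) - xm
              = a ^ 2 * (x (N + j) - xm) / ((1 + g * x (N + j)) * (1 + g * xm)) := by
            rw [hrec (N + j)]
            exact aux_step a g h (x (N + j)) xm hwne.ne hpm_neg.ne hQm
          have hden : 0 < (1 + g * x (N + j)) * (1 + g * xm) :=
            mul_pos_of_neg_of_neg hwne hpm_neg
          have hfr : a ^ 2 / ((1 + g * x (N + j)) * (1 + g * xm)) ≤ a ^ 2 / (1 + g * xm) ^ 2 := by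
            have h5 : (1 + g * xm) ^ 2 ≤ (1 + g * x (N + j)) * (1 + g * xm) := by
              have h6 := mul_le_mul_of_nonpos_right (hgmul' (x (N + j)) xm h1) hpm_neg.le
              nlinarith [h6]
            exact div_le_div_of_nonneg_left (sq_nonneg a) hpmsq h5
          have hnp : x (N + j + 1) - xm ≤ 0 := by
            rw [em]
            exact div_nonpos_of_nonpos_of_nonneg
              (mul_nonpos_of_nonneg_of_nonpos (sq_nonneg a) (by linarith)) hden.le
          refine ⟨by linarith [hnp], ?_⟩
          have h2' : xm - x (N + j) ≤ (a ^ 2 / (1 + g * xm) ^ 2) ^ j * |x N - xm| := by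
            rw [abs_of_nonpos (by linarith)] at h2
            linarith
          rw [abs_of_nonpos hnp]
          calc -(x (N + j + 1) - xm)
              = a ^ 2 / ((1 + g * x (N + j)) * (1 + g * xm)) * (xm - x (N + j)) := by
                rw [em]; ring
            _ ≤ a ^ 2 / (1 + g * xm) ^ 2 * (xm - x (N + j)) :=
                mul_le_mul_of_nonneg_right hfr (by linarith)
            _ ≤ a ^ 2 / (1 + g * xm) ^ 2 * ((a ^ 2 / (1 + g * xm) ^ 2) ^ j * |x N - xm|) :=
                mul_le_mul_of_nonneg_left h2' hρpos.le
            _ = (a ^ 2 / (1 + g * xm) ^ 2) ^ (j + 1) * |x N - xm| := by ring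
      have h0 : Tendsto (fun j : ℕ => (a ^ 2 / (1 + g * xm) ^ 2) ^ j * |x N - xm|)
          atTop (nhds 0) := by
        simpa using (tendsto_pow_atTop_nhds_zero_of_lt_one hρpos.le hρ1).mul_const |x N - xm|
      have h1 : Tendsto (fun j => x (N + j) - xm) atTop (nhds 0) :=
        squeeze_zero_norm (fun j => by rw [Real.norm_eq_abs]; exact (key j).2) h0
      have h2 : Tendsto (fun j => x (N + j)) atTop (nhds xm) := by simpa using h1.add_const xm
      have h3 : (fun j => x (N + j)) = fun j => x (j + N) := by
        funext j; rw [add_comm]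
      rw [h3] at h2
      exact (tendsto_add_atTop_iff_nat N).mp h2
    have hcross : ∃ k, 0 ≤ 1 + g * x k := by
      by_contra hc
      push_neg at hc
      have hRg1 : 1 < a ^ 2 / (1 + g * xM) ^ 2 := by
        rw [lt_div_iff₀ hpMsq]
        calc 1 * (1 + g * xM) ^ 2 = (1 + g * xM) * (1 + g * xM) := by ring
          _ < (1 + g * xM) * (1 + g * xm) := by
            have := mul_lt_mul_of_neg_right hpm_lt hpM_neg
            linarith [this]
          _ = a ^ 2 := hprod
      have hRpos : 0 < a ^ 2 / (1 + g * xM) ^ 2 := div_pos (pow_pos ha 2) hpMsq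
      have grow : ∀ k, xM < x k ∧ (x 0 - xM) * (a ^ 2 / (1 + g * xM) ^ 2) ^ k ≤ x k - xM := by
        intro k
        induction k with
        | zero => exact ⟨hx0, by simp⟩
        | succ n ih =>
          obtain ⟨h1, h2⟩ := ih
          have hzn := hc n
          have eM : x (n + 1) - xM = a ^ 2 * (x n - xM) / ((1 + g * x n) * (1 + g * xM)) := by
            rw [hrec n]; exact aux_step a g h (x n) xM hzn.ne hpM_neg.ne hQM
          have hden : 0 < (1 + g * x n) * (1 + g * xM) := mul_pos_of_neg_of_neg hzn hpM_neg
          have hfrR : a ^ 2 / (1 + g * xM) ^ 2 ≤ a ^ 2 / ((1 + g * x n) * (1 + g * xM)) := by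
            have hq : (1 + g * x n) * (1 + g * xM) ≤ (1 + g * xM) ^ 2 := by
              have := mul_le_mul_of_nonpos_right (hgmul' xM (x n) h1.le) hpM_neg.le
              nlinarith [this]
            exact div_le_div_of_nonneg_left (sq_nonneg a) hden hq
          constructor
          · have hp : 0 < x (n + 1) - xM := by
              rw [eM]
              exact div_pos (mul_pos (pow_pos ha 2) (sub_pos.mpr h1)) hden
            linarith
          · calc (x 0 - xM) * (a ^ 2 / (1 + g * xM) ^ 2) ^ (n + 1)
                = a ^ 2 / (1 + g * xM) ^ 2 * ((x 0 - xM) * (a ^ 2 / (1 + g * xM) ^ 2) ^ n) := by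
                  ring
              _ ≤ a ^ 2 / (1 + g * xM) ^ 2 * (x n - xM) :=
                  mul_le_mul_of_nonneg_left h2 hRpos.le
              _ ≤ a ^ 2 / ((1 + g * x n) * (1 + g * xM)) * (x n - xM) :=
                  mul_le_mul_of_nonneg_right hfrR (by linarith)
              _ = x (n + 1) - xM := by rw [eM]; ring
      have he0 : 0 < x 0 - xM := by linarith
      obtain ⟨n, hn⟩ := pow_unbounded_of_one_lt ((-1 / g - xM) / (x 0 - xM)) hRg1
      rw [div_lt_iff₀ he0] at hn
      have h4 := (grow n).2
      have h5 : x n < -1 / g := by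
        have h6 := hc n
        rw [lt_div_iff₀ hg]
        linarith [mul_comm (x n) g]
      nlinarith [h4, h5, hn]
    obtain ⟨N, hN⟩ := hcross
    rcases eq_or_lt_of_le hN with heq | hlt
    · have hval : x (N + 1) = h := by
        rw [hrec N, ← heq]
        simp
      exact htail (N + 1) (by rw [hval]; linarith)
    · exact htail (N + 1) (by rw [hrec N]; exact (hjump (x N) hlt).le)
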